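/- Let P be a definite clause program and S a specification such that every atom of S is covered by P w.r.t. S. If the ground program ground(P) terminates in the sense that there is no infinite fair derivation from any ground query consisting of atoms in S, then every atom of S is in the least Herbrand model M_P, i.e., P is complete w.r.t. S. In particular, if P is recurrent w.r.t. some level mapping, then coveredness of all atoms of S implies S ⊆ M_P. -/

import Mathlib

/-- A rule (ground instance of a program clause): a head atom and a list of body atoms. -/
structure GroundRule (α : Type) where
  head : α
  body : List α

/-- The least Herbrand model of a (ground) definite program `P`: the least set of
ground atoms closed under the immediate consequence operator. -/
inductive LHM {α : Type} (P : Set (GroundRule α)) : α → Prop where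
  | intro (r : GroundRule α) (hr : r ∈ P) (hb : ∀ b ∈ r.body, LHM P b) : LHM P r.head

/-- A ground atom `A` is covered by program `P` w.r.t. specification `S`:
there is a ground rule instance with head `A` and all body atoms in `S`. -/
def Covered {α : Type} (P : Set (GroundRule α)) (S : Set α) (A : α) : Prop :=
  ∃ r ∈ P, r.head = A ∧ ∀ b ∈ r.body, b ∈ S

/-- `P` is recurrent w.r.t. the level mapping `lvl`: in every ground rule instance
the level of the head strictly exceeds the level of each body atom. -/
def Recurrent {α : Type} (P : Set (GroundRule α)) (lvl : α → ℕ) : Prop :=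
  ∀ r ∈ P, ∀ b ∈ r.body, lvl b < lvl r.head

/-- An infinite (ground) SLD-derivation for program `P`, with explicit selection:
at step `n` the query `q n = pre n ++ (rule n).head :: post n`, the selected atom
(at position `(pre n).length`) is resolved using rule `rule n`. -/
structure InfDeriv {α : Type} (P : Set (GroundRule α)) where
  q : ℕ → List α
  pre : ℕ → List α
  rule : ℕ → GroundRule α
  post : ℕ → List α
  mem : ∀ n, rule n ∈ P
  eq1 : ∀ n, q n = pre n ++ (rule n).head :: post n
  eq2 : ∀ n, q (n + 1) = pre n ++ (rule n).body ++ post n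

/-- An atom occurrence (traced through the derivation from step `n` by the index
function `g`) which is never selected. -/
def UnselectedThread {α : Type} {P : Set (GroundRule α)} (D : InfDeriv P)
    (n : ℕ) (g : ℕ → ℕ) : Prop :=
  ∀ k, g k < (D.q (n + k)).length ∧ g k ≠ (D.pre (n + k)).length ∧
    g (k + 1) = if g k < (D.pre (n + k)).length then g k
                else g k - 1 + (D.rule (n + k)).body.length

/-- A fair infinite derivation: no atom occurrence stays forever unselected. -/
def FairDeriv {α : Type} {P : Set (GroundRule α)} (D : InfDeriv P) : Prop :=
  ¬ ∃ n g, UnselectedThread D n g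

namespace CTCaux

variable {α : Type}

/-- minimal tag of a nonempty tagged list -/
def tmin : List (α × ℕ) → ℕ
  | [] => 0
  | [e] => e.2
  | e :: f :: es => min e.2 (tmin (f :: es))

lemma tmin_le : ∀ (l : List (α × ℕ)), ∀ e ∈ l, tmin l ≤ e.2
  | [] => by simp
  | [e] => by simp [tmin]
  | e :: f :: es => by
      intro x hx
      rcases List.mem_cons.1 hx with h | h
      · subst h; exact min_le_left _ _
      · exact le_trans (min_le_right _ _) (tmin_le (f :: es) x h)

lemma tmin_mem : ∀ (l : List (α × ℕ)), l ≠ [] → ∃ e ∈ l, e.2 = tmin l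
  | [], h => absurd rfl h
  | [e], _ => ⟨e, by simp [tmin]⟩
  | e :: f :: es, _ => by
      rcases le_total e.2 (tmin (f :: es)) with h | h
      · exact ⟨e, by simp [tmin, min_eq_left h]⟩
      · obtain ⟨x, hx, hx2⟩ := tmin_mem (f :: es) (by simp)
        exact ⟨x, by simp [hx], by simp [tmin, min_eq_right h, hx2]⟩

def selIdx (l : List (α × ℕ)) : ℕ := l.findIdx (fun e => e.2 == tmin l)

lemma selIdx_lt {l : List (α × ℕ)} (h : l ≠ []) : selIdx l < l.length := by
  obtain ⟨e, he, he2⟩ := tmin_mem l h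
  exact List.findIdx_lt_length_of_exists ⟨e, he, by simp [he2]⟩

lemma selIdx_tag {l : List (α × ℕ)} (h : selIdx l < l.length) :
    (l[selIdx l]'h).2 = tmin l := by
  have := List.findIdx_getElem (p := fun e : α × ℕ => e.2 == tmin l) (w := h)
  exact beq_iff_eq.mp this

variable (pick : α → GroundRule α)

def stepL (m : ℕ) (l : List (α × ℕ)) : List (α × ℕ) :=
  if h : selIdx l < l.length then
    l.take (selIdx l) ++ ((pick (l[selIdx l]'h).1).body.map (fun b => (b, m + 1)))
      ++ l.drop (selIdx l + 1)
  else []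

def seqL (l0 : List (α × ℕ)) : ℕ → List (α × ℕ)
  | 0 => l0
  | n + 1 => stepL pick n (seqL l0 n)

lemma decomp {l : List (α × ℕ)} (h : selIdx l < l.length) :
    l = l.take (selIdx l) ++ (l[selIdx l]'h) :: l.drop (selIdx l + 1) := by
  conv_lhs => rw [← List.take_append_drop (selIdx l) l]
  rw [List.drop_eq_getElem_cons h]

lemma length_stepL {l : List (α × ℕ)} (h : selIdx l < l.length) (m : ℕ) :
    (stepL pick m l).length = l.length - 1 + (pick (l[selIdx l]'h).1).body.length := by
  simp only [stepL, dif_pos h, List.length_append, List.length_take, List.length_drop,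
    List.length_map, min_eq_left h.le]
  omega

lemma getElem?_stepL_left {l : List (α × ℕ)} (h : selIdx l < l.length) (m : ℕ)
    {i : ℕ} (hi : i < selIdx l) : (stepL pick m l)[i]? = l[i]? := by
  rw [stepL, dif_pos h, List.append_assoc,
    List.getElem?_append_left (by simp [min_eq_left h.le]; omega),
    List.getElem?_take, if_pos hi]

lemma getElem?_stepL_right {l : List (α × ℕ)} (h : selIdx l < l.length) (m : ℕ)
    {i : ℕ} (hi : selIdx l < i) :
    (stepL pick m l)[i - 1 + (pick (l[selIdx l]'h).1).body.length]? = l[i]? := by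
  rw [stepL, dif_pos h]
  rw [List.getElem?_append_right (by simp [min_eq_left h.le]; omega),
    List.getElem?_drop]
  congr 1
  simp only [List.length_append, List.length_take, List.length_map, min_eq_left h.le]
  omega

end CTCaux

namespace CTCaux

def Inv {α : Type} (P : Set (GroundRule α)) (S : Set α) (m : ℕ) (l : List (α × ℕ)) : Prop :=
  (∀ e ∈ l, e.1 ∈ S ∧ e.2 ≤ m) ∧ ∃ e ∈ l, ¬ LHM P e.1

lemma inv_step {α : Type} {P : Set (GroundRule α)} {S : Set α} {pick : α → GroundRule α}
    (hpick : ∀ A ∈ S, pick A ∈ P ∧ (pick A).head = A ∧ ∀ b ∈ (pick A).body, b ∈ S)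
    {m : ℕ} {l : List (α × ℕ)} (hI : Inv P S m l) :
    Inv P S (m + 1) (stepL pick m l) := by
  obtain ⟨htags, e₀, he₀, he₀bad⟩ := hI
  have hne : l ≠ [] := by rintro rfl; exact absurd he₀ List.not_mem_nil
  have h : selIdx l < l.length := selIdx_lt hne
  set sel := l[selIdx l]'h with hsel
  have hselS : sel.1 ∈ S := (htags sel (List.getElem_mem h)).1
  obtain ⟨hP, hhead, hbody⟩ := hpick sel.1 hselS
  constructor
  · intro e he
    rw [stepL, dif_pos h] at he
    simp only [List.mem_append, List.mem_map] at he
    rcases he with (he | ⟨b, hb, rfl⟩) | he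
    · have := htags e (List.mem_of_mem_take he); exact ⟨this.1, by omega⟩
    · exact ⟨hbody b hb, le_refl _⟩
    · have := htags e (List.mem_of_mem_drop he); exact ⟨this.1, by omega⟩
  · -- a bad atom survives
    have hdec := decomp h
    rw [hdec] at he₀
    simp only [List.mem_append, List.mem_cons] at he₀
    rcases he₀ with he | rfl | he
    · exact ⟨e₀, by rw [stepL, dif_pos h]; simp [he], he₀bad⟩
    · -- the selected atom is bad: some body atom must be bad
      have : ∃ b ∈ (pick sel.1).body, ¬ LHM P b := by
        by_contra hcon
        push_neg at hcon
        have := LHM.intro (pick sel.1) hP (by simpa using hcon)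
        rw [hhead] at this
        exact he₀bad (hsel ▸ this)
      obtain ⟨b, hb, hbbad⟩ := this
      refine ⟨(b, m + 1), ?_, hbbad⟩
      rw [stepL, dif_pos h]
      simp only [List.mem_append, List.mem_map]
      exact Or.inl (Or.inr ⟨b, hb, rfl⟩)
    · exact ⟨e₀, by rw [stepL, dif_pos h]; simp [he], he₀bad⟩

end CTCaux

namespace CTCaux

lemma filter_eq_nil_of {α : Type} {p : α → Bool} {l : List α}
    (h : ∀ x ∈ l, p x = false) : l.filter p = [] := by
  induction l with
  | nil => rfl
  | cons a l ih =>
      rw [List.filter_cons_of_neg (by simp [h a (by simp)])]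
      exact ih fun x hx => h x (by simp [hx])

theorem exists_fair_deriv {α : Type} (P : Set (GroundRule α)) (S : Set α)
    (hcov : ∀ A ∈ S, Covered P S A) (a : α) (ha : a ∈ S) (hna : ¬ LHM P a) :
    ∃ D : InfDeriv P, FairDeriv D ∧ ∀ x ∈ D.q 0, x ∈ S := by
  classical
  choose f hf using hcov
  set pick : α → GroundRule α := fun A => if h : A ∈ S then f A h else ⟨a, []⟩ with hpickdef
  have hpick : ∀ A ∈ S, pick A ∈ P ∧ (pick A).head = A ∧ ∀ b ∈ (pick A).body, b ∈ S := by
    intro A hA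
    simp only [hpickdef, dif_pos hA]
    exact ⟨(hf A hA).1, (hf A hA).2.1, (hf A hA).2.2⟩
  set L : ℕ → List (α × ℕ) := seqL pick [(a, 0)] with hLdef
  have hInv : ∀ n, Inv P S n (L n) := by
    intro n
    induction n with
    | zero => exact ⟨by simp [hLdef, seqL, ha], ⟨(a, 0), by simp [hLdef, seqL], hna⟩⟩
    | succ n ih => exact inv_step hpick ih
  have hne : ∀ n, L n ≠ [] := by
    intro n
    obtain ⟨e, he, _⟩ := (hInv n).2
    rintro h
    rw [h] at he
    exact List.not_mem_nil he
  have hlt : ∀ n, selIdx (L n) < (L n).length := fun n => selIdx_lt (hne n)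
  have hselS : ∀ n, ((L n)[selIdx (L n)]'(hlt n)).1 ∈ S :=
    fun n => ((hInv n).1 _ (List.getElem_mem _)).1
  refine ⟨⟨fun n => (L n).map Prod.fst,
          fun n => ((L n).take (selIdx (L n))).map Prod.fst,
          fun n => pick ((L n)[selIdx (L n)]'(hlt n)).1,
          fun n => ((L n).drop (selIdx (L n) + 1)).map Prod.fst,
          fun n => (hpick _ (hselS n)).1, ?_, ?_⟩, ?_, ?_⟩
  · -- eq1
    intro n
    rw [(hpick _ (hselS n)).2.1]
    conv_lhs => rw [decomp (hlt n)]
    rw [List.map_append, List.map_cons]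
  · -- eq2
    intro n
    show (stepL pick n (L n)).map Prod.fst = _
    rw [stepL, dif_pos (hlt n)]
    simp only [List.map_append, List.map_map]
    have hcomp : (Prod.fst ∘ fun b : α => (b, n + 1)) = id := rfl
    rw [hcomp, List.map_id]
  · -- fairness
    rintro ⟨n, g, hg⟩
    have hglen : ∀ k, g k < (L (n + k)).length := by
      intro k; have := (hg k).1; simpa using this
    have hgneq : ∀ k, g k ≠ selIdx (L (n + k)) := by
      intro k; have := (hg k).2.1
      simpa [min_eq_left (hlt (n + k)).le] using this
    have hgtrans : ∀ k, g (k + 1) = if g k < selIdx (L (n + k)) then g k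
        else g k - 1 + (pick ((L (n + k))[selIdx (L (n + k))]'(hlt _)).1).body.length := by
      intro k; have := (hg k).2.2
      simpa [min_eq_left (hlt (n + k)).le] using this
    have hthread : ∀ k, (L (n + (k + 1)))[g (k + 1)]? = (L (n + k))[g k]? := by
      intro k
      have hstep : L (n + (k + 1)) = stepL pick (n + k) (L (n + k)) := rfl
      by_cases hc : g k < selIdx (L (n + k))
      · have hg' : g (k + 1) = g k := by rw [hgtrans k, if_pos hc]
        rw [hg', hstep]
        exact getElem?_stepL_left pick (hlt (n + k)) (n + k) hc
      · have hlt' : selIdx (L (n + k)) < g k :=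
          lt_of_le_of_ne (not_lt.1 hc) (Ne.symm (hgneq k))
        have hg' : g (k + 1) = g k - 1 +
            (pick ((L (n + k))[selIdx (L (n + k))]'(hlt _)).1).body.length := by
          rw [hgtrans k, if_neg hc]
        rw [hg', hstep]
        exact getElem?_stepL_right pick (hlt (n + k)) (n + k) hlt'
    have key : ∀ k, (L (n + k))[g k]? = (L (n + 0))[g 0]? := by
      intro k
      induction k with
      | zero => rfl
      | succ k ih => rw [hthread k, ih]
    set t : ℕ := ((L (n + 0))[g 0]'(hglen 0)).2 with ht
    have htn : t ≤ n := by
      have := ((hInv (n + 0)).1 _ (List.getElem_mem (hglen 0))).2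
      simpa [ht] using this
    have hmem_t : ∀ k, ((L (n + k))[g k]'(hglen k)).2 = t := by
      intro k
      have h2 := key k
      rw [List.getElem?_eq_getElem (hglen k), List.getElem?_eq_getElem (hglen 0)] at h2
      rw [Option.some.inj h2]
    have hsel_le : ∀ k, ((L (n + k))[selIdx (L (n + k))]'(hlt _)).2 ≤ t := by
      intro k
      rw [selIdx_tag (hlt _)]
      calc tmin (L (n + k)) ≤ ((L (n + k))[g k]'(hglen k)).2 :=
            tmin_le _ _ (List.getElem_mem _)
        _ = t := hmem_t k
    have hdecr : ∀ k, ((L (n + (k + 1))).filter (fun e => decide (e.2 ≤ t))).length <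
        ((L (n + k)).filter (fun e => decide (e.2 ≤ t))).length := by
      intro k
      have hstep : L (n + (k + 1)) = stepL pick (n + k) (L (n + k)) := rfl
      conv_rhs => rw [decomp (hlt (n + k))]
      rw [hstep, stepL, dif_pos (hlt (n + k))]
      simp only [List.filter_append]
      rw [List.filter_cons_of_pos (by simp [hsel_le k]),
        filter_eq_nil_of (p := fun e : α × ℕ => decide (e.2 ≤ t))
          (l := ((pick ((L (n + k))[selIdx (L (n + k))]'(hlt _)).1).body.map
            (fun b => (b, n + k + 1))))
          (by
            intro x hx
            simp only [List.mem_map] at hx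
            obtain ⟨b, _, rfl⟩ := hx
            simp only [decide_eq_false_iff_not, not_le]
            omega)]
      simp only [List.length_append, List.length_cons, List.length_nil]
      omega
    have hdesc : ∀ k, ((L (n + k)).filter (fun e => decide (e.2 ≤ t))).length + k ≤
        ((L (n + 0)).filter (fun e => decide (e.2 ≤ t))).length := by
      intro k
      induction k with
      | zero => simp
      | succ k ih => have := hdecr k; omega
    have := hdesc (((L (n + 0)).filter (fun e => decide (e.2 ≤ t))).length + 1)
    omega
  · -- initial query in S
    intro x hx
    simp only [hLdef, seqL, List.map_cons, List.map_nil, List.mem_singleton] at hx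
    subst hx
    exact ha

end CTCaux

theorem covered_terminating_implies_complete' {α : Type}
    (P : Set (GroundRule α)) (S : Set α)
    (hcov : ∀ A ∈ S, Covered P S A) :
    ((¬ ∃ D : InfDeriv P, FairDeriv D ∧ ∀ a ∈ D.q 0, a ∈ S) → ∀ a ∈ S, LHM P a) ∧
    ((∃ lvl : α → ℕ, Recurrent P lvl) → ∀ a ∈ S, LHM P a) := by
  constructor
  · intro hterm a ha
    by_contra hna
    exact hterm (CTCaux.exists_fair_deriv P S hcov a ha hna)
  · rintro ⟨lvl, hrec⟩
    have key : ∀ n, ∀ a ∈ S, lvl a < n → LHM P a := by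
      intro n
      induction n with
      | zero => intro a _ h; omega
      | succ n ih =>
        intro a ha h
        obtain ⟨r, hrP, hhead, hbody⟩ := hcov a ha
        refine hhead ▸ LHM.intro r hrP ?_
        intro b hb
        refine ih b (hbody b hb) ?_
        have := hrec r hrP b hb
        rw [hhead] at this
        omega
    exact fun a ha => key (lvl a + 1) a ha (Nat.lt_succ_self _)

/-- Completeness via coveredness and termination: if every atom of `S` is covered by `P`
w.r.t. `S`, then (a) if there is no infinite fair derivation starting from a ground query
consisting of atoms of `S`, every atom of `S` is in `M_P` (`P` is complete w.r.t. `S`);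
in particular (b) if `P` is recurrent w.r.t. some level mapping then `S ⊆ M_P`. -/
theorem covered_terminating_implies_complete {α : Type}
    (P : Set (GroundRule α)) (S : Set α)
    (hcov : ∀ A ∈ S, Covered P S A) :
    ((¬ ∃ D : InfDeriv P, FairDeriv D ∧ ∀ a ∈ D.q 0, a ∈ S) → ∀ a ∈ S, LHM P a) ∧
    ((∃ lvl : α → ℕ, Recurrent P lvl) → ∀ a ∈ S, LHM P a) := by
  exact covered_terminating_implies_complete' P S hcov
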